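/- (Equivalence of the S-procedure LMI and the SDP-relaxation LMI) Let x₀ ∈ ℝⁿ, let P₀ be a symmetric positive definite n×n matrix, set x̃₀ = P₀⁻¹x₀, define A₀ from (x₀, P₀) in the same way as the Aᵢ, and let λ₁, …, λₘ ≥ 0. Then A₀ − Σ_{i=1}^m λᵢAᵢ is negative semidefinite if and only if the (2n+1)×(2n+1) block matrix K(P₀, x̃₀, λ) is negative semidefinite. -/

import Mathlib

open Matrix

/-- The symmetric `(n+1) × (n+1)` block matrix associated to the ellipsoid with center `c`
and positive definite shape matrix `P`:
`A = [[P⁻¹, -P⁻¹c], [-cᵀP⁻¹, cᵀP⁻¹c - 1]]`. -/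
noncomputable def ellipsoidBlock {n : ℕ} (c : Fin n → ℝ) (P : Matrix (Fin n) (Fin n) ℝ) :
    Matrix (Fin n ⊕ Unit) (Fin n ⊕ Unit) ℝ :=
  Matrix.fromBlocks P⁻¹ (Matrix.replicateCol Unit (-(P⁻¹ *ᵥ c)))
    (Matrix.replicateRow Unit (-(P⁻¹ *ᵥ c))) (Matrix.of fun _ _ => c ⬝ᵥ (P⁻¹ *ᵥ c) - 1)

/-- The symmetric `(2n+1) × (2n+1)` block matrix `K(P₀, x̃₀, λ)` of the SDP relaxation:
`[[P₀⁻¹ - Σᵢ λᵢ Pᵢ⁻¹, -x̃₀ + Σᵢ λᵢ Pᵢ⁻¹xᵢ, 0],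
  [(-x̃₀ + Σᵢ λᵢ Pᵢ⁻¹xᵢ)ᵀ, -1 - Σᵢ λᵢ(xᵢᵀPᵢ⁻¹xᵢ - 1), x̃₀ᵀ],
  [0, x̃₀, -P₀⁻¹]]`. -/
noncomputable def sdpBlockK {n m : ℕ} (x : Fin m → (Fin n → ℝ))
    (P : Fin m → Matrix (Fin n) (Fin n) ℝ)
    (P₀ : Matrix (Fin n) (Fin n) ℝ) (xt : Fin n → ℝ) (lam : Fin m → ℝ) :
    Matrix (Fin n ⊕ (Unit ⊕ Fin n)) (Fin n ⊕ (Unit ⊕ Fin n)) ℝ :=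
  Matrix.fromBlocks
    (P₀⁻¹ - ∑ i, lam i • (P i)⁻¹)
    (Matrix.fromCols (Matrix.replicateCol Unit (-xt + ∑ i, lam i • ((P i)⁻¹ *ᵥ x i))) 0)
    (Matrix.fromRows (Matrix.replicateRow Unit (-xt + ∑ i, lam i • ((P i)⁻¹ *ᵥ x i))) 0)
    (Matrix.fromBlocks
      (Matrix.of fun _ _ => -1 - ∑ i, lam i * (x i ⬝ᵥ ((P i)⁻¹ *ᵥ x i) - 1))
      (Matrix.replicateRow Unit xt) (Matrix.replicateCol Unit xt) (-P₀⁻¹))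

section helpers

variable {n m : ℕ}

lemma quad_fromBlocks {ι κ : Type*} [Fintype ι] [Fintype κ]
    (A : Matrix ι ι ℝ) (B : Matrix ι κ ℝ) (C : Matrix κ ι ℝ) (D : Matrix κ κ ℝ)
    (ξ : ι ⊕ κ → ℝ) :
    ξ ⬝ᵥ (Matrix.fromBlocks A B C D *ᵥ ξ) =
      (ξ ∘ Sum.inl) ⬝ᵥ (A *ᵥ (ξ ∘ Sum.inl)) + (ξ ∘ Sum.inl) ⬝ᵥ (B *ᵥ (ξ ∘ Sum.inr))
      + (ξ ∘ Sum.inr) ⬝ᵥ (C *ᵥ (ξ ∘ Sum.inl)) + (ξ ∘ Sum.inr) ⬝ᵥ (D *ᵥ (ξ ∘ Sum.inr)) := by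
  have hξ : ξ = Sum.elim (ξ ∘ Sum.inl) (ξ ∘ Sum.inr) := by
    funext i; cases i <;> rfl
  rw [Matrix.fromBlocks_mulVec]
  conv_lhs => rw [hξ]
  rw [sumElim_dotProduct_sumElim, dotProduct_add, dotProduct_add]
  simp only [Sum.elim_comp_inl, Sum.elim_comp_inr]
  ring

lemma dot_col_mulVec (b : Fin n → ℝ) (u : Fin n → ℝ) (w : Unit → ℝ) :
    u ⬝ᵥ (Matrix.replicateCol Unit b *ᵥ w) = (u ⬝ᵥ b) * w () := by
  simp [mulVec, dotProduct, Finset.sum_mul, mul_assoc]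

lemma dot_row_mulVec (b : Fin n → ℝ) (u : Fin n → ℝ) (w : Unit → ℝ) :
    w ⬝ᵥ (Matrix.replicateRow Unit b *ᵥ u) = w () * (b ⬝ᵥ u) := by
  simp [mulVec, dotProduct]

lemma dot_const_mulVec (c : ℝ) (w : Unit → ℝ) :
    w ⬝ᵥ ((Matrix.of fun _ _ => c : Matrix Unit Unit ℝ) *ᵥ w) = c * (w () * w ()) := by
  simp [mulVec, dotProduct]; ring

lemma quad_ellipsoidBlock (c : Fin n → ℝ) (P : Matrix (Fin n) (Fin n) ℝ)
    (ξ : (Fin n ⊕ Unit) → ℝ) :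
    ξ ⬝ᵥ (ellipsoidBlock c P *ᵥ ξ) =
      (ξ ∘ Sum.inl) ⬝ᵥ (P⁻¹ *ᵥ (ξ ∘ Sum.inl))
      - ((ξ ∘ Sum.inl) ⬝ᵥ (P⁻¹ *ᵥ c)) * ξ (Sum.inr ())
      - ξ (Sum.inr ()) * ((P⁻¹ *ᵥ c) ⬝ᵥ (ξ ∘ Sum.inl))
      + (c ⬝ᵥ (P⁻¹ *ᵥ c) - 1) * (ξ (Sum.inr ()) * ξ (Sum.inr ())) := by
  rw [ellipsoidBlock, quad_fromBlocks, dot_col_mulVec, dot_row_mulVec, dot_const_mulVec]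
  simp only [dotProduct_neg, neg_mulVec, dotProduct_neg, neg_dotProduct, Function.comp_apply]
  ring

lemma sum_smul_mulVec {ι : Type*} [Fintype ι] (f : Fin m → Matrix ι ι ℝ)
    (lam : Fin m → ℝ) (v : ι → ℝ) :
    (∑ i, lam i • f i) *ᵥ v = ∑ i, lam i • (f i *ᵥ v) := by
  funext j
  simp only [mulVec, dotProduct, Finset.sum_apply, Matrix.sum_apply, Matrix.smul_apply,
    Pi.smul_apply, smul_eq_mul, Finset.sum_mul, Finset.mul_sum, mul_assoc]
  exact Finset.sum_comm

lemma dotProduct_finset_sum {ι : Type*} [Fintype ι] (u : ι → ℝ) (w : Fin m → ι → ℝ) :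
    u ⬝ᵥ (∑ i, w i) = ∑ i, u ⬝ᵥ (w i) := by
  simp only [dotProduct, Finset.sum_apply, Finset.mul_sum]
  exact Finset.sum_comm

lemma finset_sum_dotProduct {ι : Type*} [Fintype ι] (u : ι → ℝ) (w : Fin m → ι → ℝ) :
    (∑ i, w i) ⬝ᵥ u = ∑ i, (w i) ⬝ᵥ u := by
  simp only [dotProduct, Finset.sum_apply, Finset.sum_mul]
  exact Finset.sum_comm

/-- The key quadratic-form identity relating `K` and `A₀ - ∑ λᵢ Aᵢ`. -/
lemma quad_sdpBlockK_eq (x : Fin m → (Fin n → ℝ)) (P : Fin m → Matrix (Fin n) (Fin n) ℝ)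
    (x₀ : Fin n → ℝ) (P₀ : Matrix (Fin n) (Fin n) ℝ)
    (lam : Fin m → ℝ) (ζ : (Fin n ⊕ (Unit ⊕ Fin n)) → ℝ) :
    ζ ⬝ᵥ (sdpBlockK x P P₀ (P₀⁻¹ *ᵥ x₀) lam *ᵥ ζ) =
      (Sum.elim (fun j => ζ (Sum.inl j)) (fun _ => ζ (Sum.inr (Sum.inl ())))) ⬝ᵥ
        ((ellipsoidBlock x₀ P₀ - ∑ i, lam i • ellipsoidBlock (x i) (P i)) *ᵥ
          (Sum.elim (fun j => ζ (Sum.inl j)) (fun _ => ζ (Sum.inr (Sum.inl ())))))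
      - (ζ (Sum.inr (Sum.inl ()))) * (ζ (Sum.inr (Sum.inl ()))) * (x₀ ⬝ᵥ (P₀⁻¹ *ᵥ x₀))
      + (ζ (Sum.inr (Sum.inl ()))) * ((P₀⁻¹ *ᵥ x₀) ⬝ᵥ (fun j => ζ (Sum.inr (Sum.inr j))))
      + ((fun j => ζ (Sum.inr (Sum.inr j))) ⬝ᵥ (P₀⁻¹ *ᵥ x₀)) * (ζ (Sum.inr (Sum.inl ())))
      - (fun j => ζ (Sum.inr (Sum.inr j))) ⬝ᵥ (P₀⁻¹ *ᵥ (fun j => ζ (Sum.inr (Sum.inr j)))) := by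
  set u : Fin n → ℝ := fun j => ζ (Sum.inl j) with hu
  set t : ℝ := ζ (Sum.inr (Sum.inl ())) with ht
  set v : Fin n → ℝ := fun j => ζ (Sum.inr (Sum.inr j)) with hv
  set ξ : (Fin n ⊕ Unit) → ℝ := Sum.elim u (fun _ => t) with hξ
  -- RHS: expand the difference of quadratic forms
  have hA : ξ ⬝ᵥ ((ellipsoidBlock x₀ P₀ - ∑ i, lam i • ellipsoidBlock (x i) (P i)) *ᵥ ξ) =
      ξ ⬝ᵥ (ellipsoidBlock x₀ P₀ *ᵥ ξ)
        - ∑ i, lam i * (ξ ⬝ᵥ (ellipsoidBlock (x i) (P i) *ᵥ ξ)) := by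
    rw [Matrix.sub_mulVec, dotProduct_sub, sum_smul_mulVec, dotProduct_finset_sum]
    simp only [dotProduct_smul, smul_eq_mul]
  -- LHS: expand K blockwise
  have hζl : (ζ ∘ Sum.inl) = u := rfl
  have hζr : (ζ ∘ Sum.inr) = Sum.elim (fun _ => t) v := by
    funext i; cases i with
    | inl a => cases a; rfl
    | inr j => rfl
  rw [sdpBlockK, quad_fromBlocks, hζl, hζr]
  rw [Matrix.fromCols_mulVec_sumElim, Matrix.fromRows_mulVec]
  rw [quad_fromBlocks]
  simp only [Sum.elim_comp_inl, Sum.elim_comp_inr]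
  rw [sumElim_dotProduct_sumElim]
  simp only [Matrix.zero_mulVec, dotProduct_zero, dotProduct_add, add_zero,
    dot_const_mulVec, dot_row_mulVec, dot_col_mulVec]
  rw [hA, quad_ellipsoidBlock]
  simp only [quad_ellipsoidBlock]
  -- expand all the remaining linear structure
  rw [Matrix.sub_mulVec, sum_smul_mulVec, dotProduct_sub, dotProduct_finset_sum]
  simp only [dotProduct_add, add_dotProduct, dotProduct_neg, neg_dotProduct,
    dotProduct_finset_sum, finset_sum_dotProduct, dotProduct_smul, smul_dotProduct,
    smul_eq_mul, Matrix.zero_mulVec, dotProduct_zero, zero_dotProduct, neg_mulVec,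
    Sum.elim_comp_inl, Sum.elim_comp_inr, Sum.elim_inr, hξ]
  simp only [Finset.sum_mul, Finset.mul_sum, mul_sub, sub_mul, mul_add, add_mul,
    Finset.sum_sub_distrib, Finset.sum_add_distrib, mul_one, one_mul]
  ring_nf

end helpers

/-- (Equivalence of the S-procedure LMI and the SDP-relaxation LMI) With `x̃₀ = P₀⁻¹x₀`,
the matrix `A₀ - ∑ i, λ i • A i` is negative semidefinite if and only if the block matrix
`K(P₀, x̃₀, λ)` is negative semidefinite. -/
theorem s_procedure_LMI_iff_sdp_LMI (n m : ℕ) (hn : 0 < n) (hm : 0 < m)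
    (x : Fin m → (Fin n → ℝ)) (P : Fin m → Matrix (Fin n) (Fin n) ℝ)
    (hP : ∀ i, (P i).PosDef)
    (x₀ : Fin n → ℝ) (P₀ : Matrix (Fin n) (Fin n) ℝ) (hP₀ : P₀.PosDef)
    (xt : Fin n → ℝ) (hxt : xt = P₀⁻¹ *ᵥ x₀)
    (lam : Fin m → ℝ) (hlam : ∀ i, 0 ≤ lam i) :
    (∀ ξ : (Fin n ⊕ Unit) → ℝ,
        ξ ⬝ᵥ ((ellipsoidBlock x₀ P₀ - ∑ i, lam i • ellipsoidBlock (x i) (P i)) *ᵥ ξ) ≤ 0) ↔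
      (∀ ζ : (Fin n ⊕ (Unit ⊕ Fin n)) → ℝ,
        ζ ⬝ᵥ (sdpBlockK x P P₀ xt lam *ᵥ ζ) ≤ 0) := by
  subst hxt
  have hsym : (P₀⁻¹)ᵀ = P₀⁻¹ := by
    have h := hP₀.inv.1
    rwa [Matrix.IsHermitian, Matrix.conjTranspose_eq_transpose_of_trivial] at h
  have hswap : ∀ a b : Fin n → ℝ, (P₀⁻¹ *ᵥ a) ⬝ᵥ b = a ⬝ᵥ (P₀⁻¹ *ᵥ b) := by
    intro a b
    rw [Matrix.dotProduct_mulVec, ← Matrix.vecMul_transpose, hsym, dotProduct_comm]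
  constructor
  · intro h ζ
    rw [quad_sdpBlockK_eq]
    set t : ℝ := ζ (Sum.inr (Sum.inl ())) with ht
    set v : Fin n → ℝ := fun j => ζ (Sum.inr (Sum.inr j)) with hv
    have hd : 0 ≤ (v - t • x₀) ⬝ᵥ (P₀⁻¹ *ᵥ (v - t • x₀)) := by
      have := hP₀.inv.posSemidef.dotProduct_mulVec_nonneg (v - t • x₀)
      simpa using this
    have hexp : (v - t • x₀) ⬝ᵥ (P₀⁻¹ *ᵥ (v - t • x₀)) =
        v ⬝ᵥ (P₀⁻¹ *ᵥ v) - t * ((P₀⁻¹ *ᵥ x₀) ⬝ᵥ v) - (v ⬝ᵥ (P₀⁻¹ *ᵥ x₀)) * t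
          + t * t * (x₀ ⬝ᵥ (P₀⁻¹ *ᵥ x₀)) := by
      simp only [Matrix.mulVec_sub, Matrix.mulVec_smul, dotProduct_sub, sub_dotProduct,
        dotProduct_smul, smul_dotProduct, smul_eq_mul]
      rw [← hswap x₀ v]
      ring
    have hAle := h (Sum.elim (fun j => ζ (Sum.inl j)) (fun _ => t))
    have hrest : - (t * t) * (x₀ ⬝ᵥ (P₀⁻¹ *ᵥ x₀)) + t * ((P₀⁻¹ *ᵥ x₀) ⬝ᵥ v)
        + (v ⬝ᵥ (P₀⁻¹ *ᵥ x₀)) * t - v ⬝ᵥ (P₀⁻¹ *ᵥ v)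
        = -((v - t • x₀) ⬝ᵥ (P₀⁻¹ *ᵥ (v - t • x₀))) := by
      rw [hexp]; ring
    nlinarith [hAle, hd, hrest]
  · intro h ξ
    set t : ℝ := ξ (Sum.inr ()) with ht
    have hξ : ξ = Sum.elim (fun j => ξ (Sum.inl j)) (fun _ => t) := by
      funext i; cases i with
      | inl j => rfl
      | inr u => cases u; rfl
    have hK := h (Sum.elim (fun j => ξ (Sum.inl j))
      (Sum.elim (fun _ => t) (fun j => t * x₀ j)))
    rw [quad_sdpBlockK_eq] at hK
    simp only [Sum.elim_inl, Sum.elim_inr] at hK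
    have hv : (fun j => t * x₀ j) = t • x₀ := rfl
    rw [hv] at hK
    simp only [dotProduct_smul, smul_dotProduct, Matrix.mulVec_smul, smul_eq_mul] at hK
    have hcomm : (P₀⁻¹ *ᵥ x₀) ⬝ᵥ x₀ = x₀ ⬝ᵥ (P₀⁻¹ *ᵥ x₀) := dotProduct_comm _ _
    rw [← hξ] at hK
    nlinarith [hK, hcomm]
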